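/- For n = 11, W(n) = n·⌈log₂ n⌉ - 2^⌈log₂ n⌉ + 1 satisfies W(11) = 29 > ⌈11·log₂ 11 - 0.914·11⌉ = 28; hence the upper bound W(n) ≤ ⌈n·log₂ n - 0.914·n⌉ claimed in the literature is false. -/

import Mathlib

lemma clog_11 : Nat.clog 2 11 = 4 := by
  rw [Nat.clog_of_two_le (by norm_num) (by norm_num)]; norm_num

lemma rpow_eq : (2 : ℝ) ^ (Real.logb 2 11 * 5500) = 11 ^ (5500 : ℕ) := by
  rw [Real.rpow_mul (by norm_num), Real.rpow_logb (by norm_num) (by norm_num) (by norm_num),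
    show (5500:ℝ) = ((5500:ℕ):ℝ) by norm_num, Real.rpow_natCast]

lemma logb_upper : Real.logb 2 11 * 5500 ≤ 19027 := by
  have h : (2 : ℝ) ^ (Real.logb 2 11 * 5500) ≤ (2 : ℝ) ^ (19027 : ℝ) := by
    rw [rpow_eq]
    have : ((11 : ℝ) ^ (5500 : ℕ)) ≤ (2 : ℝ) ^ (19027 : ℕ) := by
      rw [show (5500:ℕ) = 55*100 by norm_num, pow_mul, show (19027:ℕ) = 190*100+27 by norm_num,
        pow_add, pow_mul]
      norm_num
    calc ((11 : ℝ) ^ (5500 : ℕ)) ≤ (2 : ℝ) ^ (19027 : ℕ) := this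
      _ = (2 : ℝ) ^ (19027 : ℝ) := by rw [← Real.rpow_natCast]; norm_num
  exact (Real.rpow_le_rpow_left_iff (by norm_num : (1:ℝ) < 2)).mp h

lemma logb_lower : (18527 : ℝ) < Real.logb 2 11 * 5500 := by
  have h : (2 : ℝ) ^ (18527 : ℝ) < (2 : ℝ) ^ (Real.logb 2 11 * 5500) := by
    rw [rpow_eq]
    calc (2 : ℝ) ^ (18527 : ℝ) = (2 : ℝ) ^ (18527 : ℕ) := by
          rw [← Real.rpow_natCast]; norm_num
      _ < (11 : ℝ) ^ (5500 : ℕ) := by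
          rw [show (5500:ℕ) = 55*100 by norm_num, pow_mul, show (18527:ℕ) = 185*100+27 by norm_num,
            pow_add, pow_mul]
          norm_num
  exact (Real.rpow_lt_rpow_left_iff (by norm_num : (1:ℝ) < 2)).mp h

theorem counterexample_11 :
    (11 : ℤ) * Nat.clog 2 11 - 2 ^ Nat.clog 2 11 + 1 = 29 ∧
    ⌈(11 : ℝ) * Real.logb 2 11 - 0.914 * 11⌉ = 28 ∧
    ¬ ((11 : ℤ) * Nat.clog 2 11 - 2 ^ Nat.clog 2 11 + 1
        ≤ ⌈(11 : ℝ) * Real.logb 2 11 - 0.914 * 11⌉) := by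
  have h1 : (11 : ℤ) * Nat.clog 2 11 - 2 ^ Nat.clog 2 11 + 1 = 29 := by
    rw [clog_11]; norm_num
  have h2 : ⌈(11 : ℝ) * Real.logb 2 11 - 0.914 * 11⌉ = 28 := by
    rw [Int.ceil_eq_iff]
    constructor
    · have := logb_lower; push_cast; nlinarith
    · have := logb_upper; push_cast; nlinarith
  exact ⟨h1, h2, by rw [h1, h2]; norm_num⟩
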